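/- Let X be a random variable on Z/4Z with P_X(0) = P_X(2) = 1/2. For any n ≥ 1 and N = 2^n, let X^N be N i.i.d. copies of X and U^N = X^N G_N, where G_N = [[1,0],[1,1]]^{⊗n} B_N with arithmetic in the ring Z/4Z (equivalently in GF(4)). Then U^N has the same distribution as X^N; in particular, the entropies H(U_i | U^{i−1}) = 1 bit for all i and no polarization occurs. -/
import Mathlib


open Matrix

/-- The kernel `[[1,0],[1,1]]` with entries in `ℤ/4ℤ`. -/
def F2kernel4 : Matrix (Fin 2) (Fin 2) (ZMod 4) := !![1, 0; 1, 1]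

/-- `n`-th Kronecker power of the kernel, indexed by bit strings. -/
def kronPow4 (n : ℕ) : Matrix (Fin n → Fin 2) (Fin n → Fin 2) (ZMod 4) :=
  Matrix.of fun i j => ∏ k : Fin n, F2kernel4 (i k) (j k)

/-- Bit-reversal permutation matrix `B_N`. -/
def bitRev4 (n : ℕ) : Matrix (Fin n → Fin 2) (Fin n → Fin 2) (ZMod 4) :=
  Matrix.of fun i j => if i = j ∘ Fin.rev then 1 else 0

/-- The polar transform `G_N = F₂^{⊗n} B_N` with arithmetic in `ℤ/4ℤ`. -/
def polarG4 (n : ℕ) : Matrix (Fin n → Fin 2) (Fin n → Fin 2) (ZMod 4) :=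
  kronPow4 n * bitRev4 n

/-- The MSB-first numbering of indices by bit strings. -/
def ord {n : ℕ} (i : Fin n → Fin 2) : ℕ :=
  ∑ k : Fin n, (i k).val * 2 ^ (n - 1 - k.val)

/-- The pmf of the source `X` on `ℤ/4ℤ` with `P_X(0) = P_X(2) = 1/2`. -/
noncomputable def pX : ZMod 4 → ℝ := fun x => if x = 0 ∨ x = 2 then 1 / 2 else 0

/-- Joint pmf of `N` i.i.d. copies of `X`. -/
noncomputable def pXN {n : ℕ} (x : (Fin n → Fin 2) → ZMod 4) : ℝ :=
  ∏ i : Fin n → Fin 2, pX (x i)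

/-- Conditional Shannon entropy (base 2) of a joint pmf `q x y`. -/
noncomputable def condEnt {α β : Type*} [Fintype α] (q : α → β → ℝ) : ℝ :=
  ∑' y : β, ∑ x : α, -(q x y * Real.logb 2 (q x y / ∑ x' : α, q x' y))


def kerInv4 : Matrix (Fin 2) (Fin 2) (ZMod 4) := !![1, 0; 3, 1]
def kronInv4 (n : ℕ) : Matrix (Fin n → Fin 2) (Fin n → Fin 2) (ZMod 4) :=
  Matrix.of fun i j => ∏ k : Fin n, kerInv4 (i k) (j k)

lemma ker_mul_inv : F2kernel4 * kerInv4 = 1 := by decide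

lemma kron_mul_inv (n : ℕ) : kronPow4 n * kronInv4 n = 1 := by
  ext i j
  simp only [Matrix.mul_apply, kronPow4, kronInv4, Matrix.of_apply]
  have h1 : ∀ k : Fin n → Fin 2,
      (∏ r, F2kernel4 (i r) (k r)) * ∏ r, kerInv4 (k r) (j r)
        = ∏ r, (F2kernel4 (i r) (k r) * kerInv4 (k r) (j r)) :=
    fun k => Finset.prod_mul_distrib.symm
  simp_rw [h1]
  rw [← Fintype.prod_sum (f := fun r b => F2kernel4 (i r) b * kerInv4 b (j r))]
  have h2 : ∀ r : Fin n, (∑ b : Fin 2, F2kernel4 (i r) b * kerInv4 b (j r))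
      = (1 : Matrix (Fin 2) (Fin 2) (ZMod 4)) (i r) (j r) := by
    intro r; rw [← ker_mul_inv, Matrix.mul_apply]
  simp_rw [h2, Matrix.one_apply]
  by_cases h : i = j
  · subst h; simp
  · rw [if_neg h]
    obtain ⟨r, hr⟩ : ∃ r, i r ≠ j r := by
      by_contra hc; push_neg at hc; exact h (funext hc)
    exact Finset.prod_eq_zero (Finset.mem_univ r) (if_neg hr)

lemma bitRev_mul_transpose (n : ℕ) : bitRev4 n * (bitRev4 n)ᵀ = 1 := by
  have hrr : ∀ g : Fin n → Fin 2, (g ∘ Fin.rev) ∘ Fin.rev = g := by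
    intro g; funext k; simp [Function.comp, Fin.rev_rev]
  ext i j
  simp only [Matrix.mul_apply, Matrix.transpose_apply, bitRev4, Matrix.of_apply]
  rw [Finset.sum_eq_single (i ∘ Fin.rev)]
  · simp only [hrr, if_pos rfl, one_mul, Matrix.one_apply]
    by_cases h : i = j
    · simp [h]
    · rw [if_neg (Ne.symm h), if_neg h]; ring
  · intro k _ hk
    rw [if_neg, zero_mul]
    intro hik
    exact hk (by rw [hik, hrr])
  · intro h; exact absurd (Finset.mem_univ _) h

def polarInv4 (n : ℕ) : Matrix (Fin n → Fin 2) (Fin n → Fin 2) (ZMod 4) :=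
  (bitRev4 n)ᵀ * kronInv4 n

lemma polar_mul_inv (n : ℕ) : polarG4 n * polarInv4 n = 1 := by
  have h : polarG4 n * polarInv4 n
      = kronPow4 n * (bitRev4 n * (bitRev4 n)ᵀ) * kronInv4 n := by
    simp [polarG4, polarInv4, Matrix.mul_assoc]
  rw [h, bitRev_mul_transpose, Matrix.mul_one, kron_mul_inv]

lemma inv_mul_polar (n : ℕ) : polarInv4 n * polarG4 n = 1 :=
  mul_eq_one_comm.mp (polar_mul_inv n)

noncomputable def polarEquiv (n : ℕ) :
    ((Fin n → Fin 2) → ZMod 4) ≃ ((Fin n → Fin 2) → ZMod 4) where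
  toFun x := Matrix.vecMul x (polarG4 n)
  invFun u := Matrix.vecMul u (polarInv4 n)
  left_inv x := by
    show Matrix.vecMul (Matrix.vecMul x (polarG4 n)) (polarInv4 n) = x
    rw [Matrix.vecMul_vecMul, polar_mul_inv, Matrix.vecMul_one]
  right_inv u := by
    show Matrix.vecMul (Matrix.vecMul u (polarInv4 n)) (polarG4 n) = u
    rw [Matrix.vecMul_vecMul, inv_mul_polar, Matrix.vecMul_one]

lemma pX_eq (a : ZMod 4) : pX a = if 2 * a = 0 then 1/2 else 0 := by
  have h : (a = 0 ∨ a = 2) ↔ 2 * a = 0 := by revert a; decide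
  simp only [pX]
  rw [if_congr h rfl rfl]

lemma sum_pX : ∑ a : ZMod 4, pX a = 1 := by
  have h : ∑ a : ZMod 4, pX a = pX 0 + pX 1 + pX 2 + pX 3 := Fin.sum_univ_four pX
  have h0 : pX 0 = 1/2 := if_pos (by decide)
  have h1 : pX 1 = 0 := if_neg (by decide)
  have h2 : pX 2 = 1/2 := if_pos (by decide)
  have h3 : pX 3 = 0 := if_neg (by decide)
  rw [h, h0, h1, h2, h3]; norm_num

lemma support_vecMul {n : ℕ} (M : Matrix (Fin n → Fin 2) (Fin n → Fin 2) (ZMod 4))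
    (x : (Fin n → Fin 2) → ZMod 4) (hx : ∀ j, 2 * x j = 0) :
    ∀ i, 2 * (Matrix.vecMul x M) i = 0 := by
  intro i
  have h : Matrix.vecMul x M i = ∑ j, x j * M j i := by
    simp [Matrix.vecMul, dotProduct]
  rw [h, Finset.mul_sum]
  apply Finset.sum_eq_zero
  intro j _
  rw [← mul_assoc, hx j, zero_mul]

lemma pXN_eq {n : ℕ} (x : (Fin n → Fin 2) → ZMod 4) :
    pXN x = if (∀ i, 2 * x i = 0) then (1/2 : ℝ) ^ (Fintype.card (Fin n → Fin 2)) else 0 := by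
  by_cases h : ∀ i, 2 * x i = 0
  · rw [if_pos h, pXN]
    rw [show (∏ i : Fin n → Fin 2, pX (x i)) = ∏ _i : Fin n → Fin 2, (1/2 : ℝ) from
      Finset.prod_congr rfl fun i _ => by rw [pX_eq, if_pos (h i)]]
    rw [Finset.prod_const, Finset.card_univ]
  · rw [if_neg h, pXN]
    push_neg at h
    obtain ⟨i, hi⟩ := h
    exact Finset.prod_eq_zero (Finset.mem_univ i) (by rw [pX_eq, if_neg hi])

lemma pXN_map {n : ℕ} (x : (Fin n → Fin 2) → ZMod 4) :
    pXN (Matrix.vecMul x (polarG4 n)) = pXN x := by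
  rw [pXN_eq, pXN_eq]
  congr 1
  apply propext
  constructor
  · intro h i
    have h2 := support_vecMul (polarInv4 n) _ h
    rw [Matrix.vecMul_vecMul, polar_mul_inv, Matrix.vecMul_one] at h2
    exact h2 i
  · intro h
    exact support_vecMul _ _ h

lemma marginal {κ : Type*} [Fintype κ] [DecidableEq κ] (p : κ → Prop) [DecidablePred p]
    (t : κ → ZMod 4) :
    (∑ y : κ → ZMod 4, if ∀ k, p k → y k = t k then ∏ k, pX (y k) else 0)
      = ∏ k : {k // p k}, pX (t k.1) := by
  rw [← Equiv.sum_comp (Equiv.piEquivPiSubtypeProd p (fun _ => ZMod 4)).symm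
    (fun y => if ∀ k, p k → y k = t k then ∏ k, pX (y k) else 0)]
  rw [Fintype.sum_prod_type]
  have key : ∀ (y₁ : {k // p k} → ZMod 4) (y₂ : {k // ¬ p k} → ZMod 4),
      (fun y => if ∀ k, p k → y k = t k then ∏ k, pX (y k) else 0)
          ((Equiv.piEquivPiSubtypeProd p (fun _ => ZMod 4)).symm (y₁, y₂))
        = (if y₁ = (fun k => t k.1) then ∏ k : {k // p k}, pX (y₁ k) else 0)
            * ∏ k : {k // ¬ p k}, pX (y₂ k) := by
    intro y₁ y₂
    simp only [Equiv.piEquivPiSubtypeProd_symm_apply]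
    have hcond : (∀ k, p k → (if h : p k then y₁ ⟨k, h⟩ else y₂ ⟨k, h⟩) = t k)
        ↔ y₁ = (fun k => t k.1) := by
      constructor
      · intro h; funext k
        have hh := h k.1 k.2
        rwa [dif_pos k.2] at hh
      · intro h k hk
        rw [dif_pos hk, h]
    have hprod : (∏ k, pX (if h : p k then y₁ ⟨k, h⟩ else y₂ ⟨k, h⟩))
        = (∏ k : {k // p k}, pX (y₁ k)) * ∏ k : {k // ¬ p k}, pX (y₂ k) := by
      rw [← Fintype.prod_subtype_mul_prod_subtype p
        (fun k => pX (if h : p k then y₁ ⟨k, h⟩ else y₂ ⟨k, h⟩))]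
      congr 1
      · exact Finset.prod_congr rfl fun k _ => by rw [dif_pos k.2]
      · exact Finset.prod_congr rfl fun k _ => by rw [dif_neg k.2]
    rw [hprod, if_congr hcond rfl rfl, ite_mul, zero_mul]
  simp_rw [key]
  rw [← Finset.sum_mul_sum]
  rw [Finset.sum_ite_eq' Finset.univ (fun k => t k.1)
    (fun y₁ => ∏ k : {k // p k}, pX (y₁ k))]
  rw [if_pos (Finset.mem_univ _)]
  have hfree : (∑ y₂ : {k // ¬ p k} → ZMod 4, ∏ k, pX (y₂ k)) = 1 := by
    rw [← Fintype.prod_sum (f := fun (_ : {k // ¬ p k}) (b : ZMod 4) => pX b)]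
    simp [sum_pX]
  rw [hfree, mul_one]

lemma hlog2 : Real.logb 2 (1/2) = -1 := by
  rw [one_div, Real.logb_inv, Real.logb_self_eq_one] <;> norm_num

/-- Counterexample over the non-prime alphabet `ℤ/4ℤ`: for `X` uniform on
`{0,2}` and `U^N = X^N G_N`, the vector `U^N` has the same distribution as
`X^N`; in particular `H(U_i | U^{i-1}) = 1` bit for every `i`, so no
polarization occurs. -/
theorem stmt16 (n : ℕ) (hn : 1 ≤ n) :
    (∀ u : (Fin n → Fin 2) → ZMod 4,
      (∑ x : (Fin n → Fin 2) → ZMod 4,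
        if Matrix.vecMul x (polarG4 n) = u then pXN x else 0) = pXN u) ∧
    (∀ i : Fin n → Fin 2,
      condEnt (fun (a : ZMod 4) (v : {j : Fin n → Fin 2 // ord j < ord i} → ZMod 4) =>
        ∑ x : (Fin n → Fin 2) → ZMod 4,
          if Matrix.vecMul x (polarG4 n) i = a ∧
              (∀ j : {j : Fin n → Fin 2 // ord j < ord i},
                Matrix.vecMul x (polarG4 n) j.1 = v j)
          then pXN x else 0) = 1) := by
  constructor
  · intro u
    have he : ∀ x : (Fin n → Fin 2) → ZMod 4,
        Matrix.vecMul x (polarG4 n) = polarEquiv n x := fun _ => rfl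
    simp_rw [he, Equiv.apply_eq_iff_eq_symm_apply]
    rw [Finset.sum_ite_eq' Finset.univ ((polarEquiv n).symm u) pXN,
      if_pos (Finset.mem_univ _)]
    conv_rhs => rw [← (polarEquiv n).apply_symm_apply u]
    exact (pXN_map _).symm
  · intro i
    classical
    set T : Finset (Fin n → Fin 2) := Finset.univ.filter (fun j => ord j < ord i) with hT
    have hiT : i ∉ T := by simp [hT]
    have hq : ∀ (a : ZMod 4) (v : {j : Fin n → Fin 2 // ord j < ord i} → ZMod 4),
        (∑ x : (Fin n → Fin 2) → ZMod 4,
          if Matrix.vecMul x (polarG4 n) i = a ∧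
              (∀ j : {j : Fin n → Fin 2 // ord j < ord i},
                Matrix.vecMul x (polarG4 n) j.1 = v j)
          then pXN x else 0)
        = pX a * ∏ j : {j : Fin n → Fin 2 // ord j < ord i}, pX (v j) := by
      intro a v
      set t : (Fin n → Fin 2) → ZMod 4 :=
        fun k => if h : ord k < ord i then v ⟨k, h⟩ else a with ht
      have hcond : ∀ y : (Fin n → Fin 2) → ZMod 4,
          (y i = a ∧ (∀ j : {j : Fin n → Fin 2 // ord j < ord i}, y j.1 = v j))
            ↔ (∀ k, (ord k < ord i ∨ k = i) → y k = t k) := by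
        intro y
        constructor
        · rintro ⟨h1, h2⟩ k hk
          rcases hk with hk | rfl
          · rw [ht]; simp only [dif_pos hk]; exact h2 ⟨k, hk⟩
          · rw [ht]; simp only [dif_neg (lt_irrefl (ord k))]; exact h1
        · intro h
          constructor
          · have hh := h i (Or.inr rfl)
            rw [ht] at hh
            simp only [dif_neg (lt_irrefl (ord i))] at hh
            exact hh
          · intro j
            have hh := h j.1 (Or.inl j.2)
            rw [ht] at hh
            simp only [dif_pos j.2] at hh
            exact hh
      calc (∑ x : (Fin n → Fin 2) → ZMod 4,
          if Matrix.vecMul x (polarG4 n) i = a ∧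
              (∀ j : {j : Fin n → Fin 2 // ord j < ord i},
                Matrix.vecMul x (polarG4 n) j.1 = v j)
          then pXN x else 0)
          = ∑ y : (Fin n → Fin 2) → ZMod 4,
            if y i = a ∧
                (∀ j : {j : Fin n → Fin 2 // ord j < ord i}, y j.1 = v j)
              then pXN y else 0 := by
            refine Fintype.sum_equiv (polarEquiv n) _ _ fun x => ?_
            have hx : (polarEquiv n) x = Matrix.vecMul x (polarG4 n) := rfl
            rw [hx, pXN_map]
        _ = ∑ y : (Fin n → Fin 2) → ZMod 4,
            if (∀ k, (ord k < ord i ∨ k = i) → y k = t k)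
              then ∏ k, pX (y k) else 0 := by
            refine Finset.sum_congr rfl fun y _ => ?_
            exact if_congr (hcond y) rfl rfl
        _ = ∏ k : {k : Fin n → Fin 2 // ord k < ord i ∨ k = i}, pX (t k.1) :=
            marginal _ t
        _ = ∏ k ∈ insert i T, pX (t k) := by
            rw [Finset.prod_subtype (p := fun k => ord k < ord i ∨ k = i) (insert i T)
              (fun k => by simp [hT, Finset.mem_insert, or_comm]) (fun k => pX (t k))]
        _ = pX (t i) * ∏ k ∈ T, pX (t k) := Finset.prod_insert hiT
        _ = pX a * ∏ j : {j : Fin n → Fin 2 // ord j < ord i}, pX (v j) := by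
            congr 1
            · rw [ht]; simp only [dif_neg (lt_irrefl (ord i))]
            · rw [Finset.prod_subtype (p := fun j => ord j < ord i) T
                (fun k => by simp [hT]) (fun k => pX (t k))]
              exact Finset.prod_congr rfl fun k _ => by rw [ht]; simp only [dif_pos k.2]
    unfold condEnt
    rw [tsum_fintype]
    simp_rw [hq]
    have hden : ∀ v : {j : Fin n → Fin 2 // ord j < ord i} → ZMod 4,
        (∑ a' : ZMod 4, pX a' * ∏ j, pX (v j)) = ∏ j, pX (v j) := by
      intro v; rw [← Finset.sum_mul, sum_pX, one_mul]
    simp_rw [hden]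
    have hv : ∀ v : {j : Fin n → Fin 2 // ord j < ord i} → ZMod 4,
        (∑ a : ZMod 4, -((pX a * ∏ j, pX (v j)) *
            Real.logb 2 ((pX a * ∏ j, pX (v j)) / ∏ j, pX (v j))))
          = ∏ j, pX (v j) := by
      intro v
      set c : ℝ := ∏ j, pX (v j) with hc
      by_cases hc0 : c = 0
      · simp [hc0]
      · have harg : ∀ a : ZMod 4, (pX a * c) / c = pX a := fun a => by
          field_simp
        simp_rw [harg]
        have h4 : (∑ a : ZMod 4, -(pX a * c * Real.logb 2 (pX a)))
            = -(pX 0 * c * Real.logb 2 (pX 0)) + -(pX 1 * c * Real.logb 2 (pX 1))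
              + -(pX 2 * c * Real.logb 2 (pX 2)) + -(pX 3 * c * Real.logb 2 (pX 3)) :=
          Fin.sum_univ_four _
        rw [h4]
        have h0 : pX 0 = 1/2 := if_pos (by decide)
        have h1 : pX 1 = 0 := if_neg (by decide)
        have h2 : pX 2 = 1/2 := if_pos (by decide)
        have h3 : pX 3 = 0 := if_neg (by decide)
        rw [h0, h1, h2, h3, hlog2]
        ring
    simp_rw [hv]
    rw [show (∑ v : {j : Fin n → Fin 2 // ord j < ord i} → ZMod 4, ∏ j, pX (v j))
        = ∏ _j : {j : Fin n → Fin 2 // ord j < ord i}, ∑ b : ZMod 4, pX b from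
      (Fintype.prod_sum fun _ b => pX b).symm]
    simp [sum_pX]
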